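/- Let $I$ be a countable discrete set and $f, g : I \to [0,\infty)$ with $f$ proper. Fix $c > 0$ and $\delta, \kappa \in \mathbb{R}$ with $\delta + \kappa > 0$ and $\delta \ne 0$. If $\sum_{i \in I,\, f(i) \le t} e^{\kappa f(i)} g(i) \sim \frac{e^{(\delta+\kappa)t}}{\delta + \kappa}$ as $t \to \infty$, then $\sum_{i \in I,\, t-c < f(i) \le t} g(i) \sim \frac{1 - e^{-c\delta}}{\delta} e^{\delta t}$ as $t \to \infty$. -/

import Mathlib

open Filter

lemma aux_tsum_ind {I : Type*} (F : I → ℝ) (s : Set I) (hs : s.Finite) :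
    ∑' i, s.indicator F i = ∑ i ∈ hs.toFinset, F i := by
  rw [tsum_eq_sum (s := hs.toFinset)
    (fun i hi => Set.indicator_of_notMem (fun hm => hi (hs.mem_toFinset.2 hm)) F)]
  exact Finset.sum_congr rfl fun i hi => Set.indicator_of_mem (hs.mem_toFinset.1 hi) F

lemma aux_slope (b : ℝ) :
    Tendsto (fun h : ℝ => (Real.exp (b*h) - 1)/h) (nhdsWithin 0 {x | x ≠ 0}) (nhds b) := by
  have hd : HasDerivAt (fun y : ℝ => Real.exp (b*y)) b 0 := by
    simpa [Function.comp_def] using ((Real.hasDerivAt_exp (b*0)).comp 0 ((hasDerivAt_id 0).const_mul b))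
  refine (hasDerivAt_iff_tendsto_slope.1 hd).congr' ?_
  filter_upwards [self_mem_nhdsWithin] with x hx
  simp [slope_def_field]

lemma aux_exp_tendsto_one (s : ℝ) :
    Tendsto (fun h : ℝ => Real.exp (s*h)) (nhdsWithin 0 {x | x ≠ 0}) (nhds 1) := by
  have : Continuous fun h : ℝ => Real.exp (s*h) := Real.continuous_exp.comp (continuous_const.mul continuous_id)
  simpa using (this.tendsto 0).mono_left nhdsWithin_le_nhds

lemma aux_lim_ratio (a δ : ℝ) (hδ : δ ≠ 0) :
    Tendsto (fun h : ℝ => (1 - Real.exp (-(a*h)))/(Real.exp (δ*h) - 1))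
      (nhdsWithin 0 {x | x ≠ 0}) (nhds (a/δ)) := by
  have hnum : Tendsto (fun h : ℝ => -((Real.exp (-a*h) - 1)/h)) (nhdsWithin 0 {x | x ≠ 0}) (nhds a) := by
    simpa using (aux_slope (-a)).neg
  have := hnum.div (aux_slope δ) hδ
  refine this.congr' ?_
  filter_upwards [self_mem_nhdsWithin] with x (hx : x ≠ 0)
  simp only [Pi.div_apply]
  rw [← neg_div, div_div_div_cancel_right₀ hx]; ring

lemma aux_lim_hratio (δ : ℝ) (hδ : δ ≠ 0) :
    Tendsto (fun h : ℝ => h/(Real.exp (δ*h) - 1)) (nhdsWithin 0 {x | x ≠ 0}) (nhds (1/δ)) := by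
  have := (aux_slope δ).inv₀ hδ
  rw [show δ⁻¹ = 1/δ by ring] at this
  refine this.congr' ?_
  filter_upwards [self_mem_nhdsWithin] with x (hx : x ≠ 0)
  rw [inv_div]

lemma aux_hseq (c : ℝ) (hc : 0 < c) :
    Tendsto (fun n : ℕ => c/((n:ℝ)+1)) atTop (nhdsWithin 0 {x | x ≠ 0}) := by
  apply tendsto_nhdsWithin_of_tendsto_nhds_of_eventually_within
  · have : Tendsto (fun n : ℕ => ((n:ℝ)+1)) atTop atTop :=
      tendsto_atTop_add_const_right _ 1 tendsto_natCast_atTop_atTop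
    exact Tendsto.div_atTop tendsto_const_nhds this
  · exact Eventually.of_forall fun n => ne_of_gt (div_pos hc (by positivity))

lemma aux_inv_seq (c : ℝ) (hc : 0 < c) :
    Tendsto (fun n : ℕ => 1/(((n:ℝ)+1)*c)) atTop (nhds 0) := by
  have : Tendsto (fun n : ℕ => ((n:ℝ)+1)*c) atTop atTop := by
    apply Tendsto.atTop_mul_const hc
    exact tendsto_atTop_add_const_right _ 1 tendsto_natCast_atTop_atTop
  exact Tendsto.div_atTop tendsto_const_nhds this

lemma aux_squeeze {α : Type*} {l : Filter α} (F : α → ℝ) (U V : ℕ → ℝ) (L : ℝ)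
    (hU : Tendsto U atTop (nhds L)) (hV : Tendsto V atTop (nhds L))
    (hb : ∀ n, ∀ᶠ t in l, V n ≤ F t ∧ F t ≤ U n) : Tendsto F l (nhds L) := by
  rw [Metric.tendsto_nhds]
  intro η hη
  have h1 := (Metric.tendsto_nhds.1 hU (η/2) (by linarith)).and
    (Metric.tendsto_nhds.1 hV (η/2) (by linarith))
  obtain ⟨n, hn1, hn2⟩ := h1.exists
  rw [Real.dist_eq, abs_lt] at hn1 hn2
  filter_upwards [hb n] with t ⟨hlo, hhi⟩
  rw [Real.dist_eq, abs_lt]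
  constructor <;> cases hn1 <;> cases hn2 <;> linarith

/-- Asymptotic transfer lemma (Lemma 9.5 of Paulin–Pollicott–Schapira), converse direction:
from asymptotics of exponentially weighted cumulative sums to asymptotics of annulus sums. -/
theorem stmt1 {I : Type*} [Countable I] (f g : I → ℝ)
    (hf0 : ∀ i, 0 ≤ f i) (hg0 : ∀ i, 0 ≤ g i)
    (hproper : ∀ t : ℝ, {i : I | f i ≤ t}.Finite)
    (c δ κ : ℝ) (hc : 0 < c) (hδκ : 0 < δ + κ) (hδ : δ ≠ 0)
    (h : Tendsto (fun t : ℝ =>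
        (∑' i : I, Set.indicator {i : I | f i ≤ t} (fun i => Real.exp (κ * f i) * g i) i)
          / (Real.exp ((δ + κ) * t) / (δ + κ)))
      atTop (nhds 1)) :
    Tendsto (fun t : ℝ =>
        (∑' i : I, Set.indicator {i : I | t - c < f i ∧ f i ≤ t} g i)
          / ((1 - Real.exp (-(c * δ))) / δ * Real.exp (δ * t)))
      atTop (nhds 1) := by
  classical
  set a : ℝ := δ + κ with ha
  have ha0 : (0:ℝ) < a := hδκ
  have hAnnFin : ∀ u t : ℝ, {i : I | u < f i ∧ f i ≤ t}.Finite :=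
    fun u t => (hproper t).subset fun i hi => hi.2
  set S : ℝ → ℝ := fun t => ∑ i ∈ (hproper t).toFinset, Real.exp (κ * f i) * g i with hS
  set W : ℝ → ℝ → ℝ := fun u t => ∑ i ∈ (hAnnFin u t).toFinset, Real.exp (κ * f i) * g i with hW
  set A : ℝ → ℝ → ℝ := fun u t => ∑ i ∈ (hAnnFin u t).toFinset, g i with hA
  have hts1 : ∀ t : ℝ, (∑' i : I, Set.indicator {i : I | f i ≤ t}
      (fun i => Real.exp (κ * f i) * g i) i) = S t :=
    fun t => aux_tsum_ind _ _ (hproper t)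
  have hts2 : ∀ t : ℝ, (∑' i : I, Set.indicator {i : I | t - c < f i ∧ f i ≤ t} g i)
      = A (t-c) t := fun t => aux_tsum_ind _ _ (hAnnFin (t-c) t)
  -- splitting of S
  have hsplit : ∀ u t : ℝ, u ≤ t → S t = S u + W u t := by
    intro u t hut
    have hdisj : Disjoint (hproper u).toFinset (hAnnFin u t).toFinset := by
      rw [Finset.disjoint_left]
      intro i hi1 hi2
      rw [Set.Finite.mem_toFinset] at hi1 hi2
      exact absurd hi1 (not_le.2 hi2.1)
    have hunion : (hproper t).toFinset = (hproper u).toFinset ∪ (hAnnFin u t).toFinset := by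
      ext i
      simp only [Finset.mem_union, Set.Finite.mem_toFinset, Set.mem_setOf_eq]
      constructor
      · intro hi
        rcases le_or_gt (f i) u with h'|h'
        · exact Or.inl h'
        · exact Or.inr ⟨h', hi⟩
      · rintro (h'|h')
        exacts [h'.trans hut, h'.2]
    rw [hS, hW]
    simp only
    rw [hunion]
    exact Finset.sum_union hdisj
  -- additivity of A
  have hAadd : ∀ u v t : ℝ, u ≤ v → v ≤ t → A u t = A u v + A v t := by
    intro u v t huv hvt
    have hdisj : Disjoint (hAnnFin u v).toFinset (hAnnFin v t).toFinset := by
      rw [Finset.disjoint_left]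
      intro i hi1 hi2
      rw [Set.Finite.mem_toFinset] at hi1 hi2
      exact absurd hi1.2 (not_le.2 hi2.1)
    have hunion : (hAnnFin u t).toFinset = (hAnnFin u v).toFinset ∪ (hAnnFin v t).toFinset := by
      ext i
      simp only [Finset.mem_union, Set.Finite.mem_toFinset, Set.mem_setOf_eq]
      constructor
      · rintro ⟨h1, h2⟩
        rcases le_or_gt (f i) v with h'|h'
        · exact Or.inl ⟨h1, h'⟩
        · exact Or.inr ⟨h', h2⟩
      · rintro (⟨h1,h2⟩|⟨h1,h2⟩)
        exacts [⟨h1, h2.trans hvt⟩, ⟨huv.trans_lt h1, h2⟩]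
    rw [hA]
    simp only
    rw [hunion]
    exact Finset.sum_union hdisj
  -- vanishing of A on degenerate annuli
  have hAzero : ∀ u : ℝ, A u u = 0 := by
    intro u
    have : (hAnnFin u u).toFinset = ∅ := by
      rw [Set.Finite.toFinset_eq_empty, Set.eq_empty_iff_forall_notMem]
      rintro i ⟨h1, h2⟩
      exact absurd h2 (not_le.2 h1)
    rw [hA]
    simp only [this, Finset.sum_empty]
  -- comparison on annuli
  have hcomp : ∀ u v : ℝ, u ≤ v →
      Real.exp (-(κ*v) - |κ| * (v-u)) * W u v ≤ A u v ∧
      A u v ≤ Real.exp (-(κ*v) + |κ| * (v-u)) * W u v := by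
    intro u v huv
    have key : ∀ i ∈ (hAnnFin u v).toFinset,
        Real.exp (-(κ*v) - |κ| * (v-u)) * (Real.exp (κ * f i) * g i) ≤ g i ∧
        g i ≤ Real.exp (-(κ*v) + |κ| * (v-u)) * (Real.exp (κ * f i) * g i) := by
      intro i hi
      rw [Set.Finite.mem_toFinset] at hi
      obtain ⟨h1, h2⟩ := hi
      have habs1 : κ*(f i - v) ≤ |κ| * (v - f i) := by
        calc κ*(f i - v) ≤ |κ*(f i - v)| := le_abs_self _
        _ = |κ| * |f i - v| := abs_mul _ _
        _ = |κ| * (v - f i) := by rw [abs_of_nonpos (show f i - v ≤ 0 by linarith)]; ring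
      have habs2 : κ*(v - f i) ≤ |κ| * (v - f i) := by
        calc κ*(v - f i) ≤ |κ*(v - f i)| := le_abs_self _
        _ = |κ| * |v - f i| := abs_mul _ _
        _ = |κ| * (v - f i) := by rw [abs_of_nonneg (show (0:ℝ) ≤ v - f i by linarith)]
      have habs3 : |κ| * (v - f i) ≤ |κ| * (v - u) :=
        mul_le_mul_of_nonneg_left (by linarith) (abs_nonneg κ)
      have e1 : Real.exp (-(κ*v) - |κ| * (v-u)) * Real.exp (κ * f i) ≤ 1 := by
        rw [← Real.exp_add, ← Real.exp_zero]
        apply Real.exp_le_exp.2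
        nlinarith
      have e2 : (1:ℝ) ≤ Real.exp (-(κ*v) + |κ| * (v-u)) * Real.exp (κ * f i) := by
        rw [← Real.exp_add, ← Real.exp_zero]
        apply Real.exp_le_exp.2
        nlinarith
      constructor
      · calc Real.exp (-(κ*v) - |κ| * (v-u)) * (Real.exp (κ * f i) * g i)
            = (Real.exp (-(κ*v) - |κ| * (v-u)) * Real.exp (κ * f i)) * g i := by ring
        _ ≤ 1 * g i := mul_le_mul_of_nonneg_right e1 (hg0 i)
        _ = g i := one_mul _
      · calc g i = 1 * g i := (one_mul _).symm
        _ ≤ (Real.exp (-(κ*v) + |κ| * (v-u)) * Real.exp (κ * f i)) * g i :=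
            mul_le_mul_of_nonneg_right e2 (hg0 i)
        _ = Real.exp (-(κ*v) + |κ| * (v-u)) * (Real.exp (κ * f i) * g i) := by ring
    constructor
    · rw [hA, hW]
      simp only
      rw [Finset.mul_sum]
      exact Finset.sum_le_sum fun i hi => (key i hi).1
    · rw [hA, hW]
      simp only
      rw [Finset.mul_sum]
      exact Finset.sum_le_sum fun i hi => (key i hi).2
  -- quantitative bounds on S
  have hE : ∀ u : ℝ, 0 < Real.exp (a*u)/a := fun u => div_pos (Real.exp_pos _) ha0
  have hSbound : ∀ ε : ℝ, 0 < ε → ∀ᶠ u : ℝ in atTop,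
      (1-ε) * (Real.exp (a*u)/a) ≤ S u ∧ S u ≤ (1+ε) * (Real.exp (a*u)/a) := by
    intro ε hε
    have h2 : Tendsto (fun t => S t / (Real.exp (a*t)/a)) atTop (nhds 1) :=
      h.congr fun t => by rw [hts1]
    filter_upwards [Metric.tendsto_nhds.1 h2 ε hε] with u hu
    rw [Real.dist_eq, abs_lt] at hu
    exact ⟨(le_div_iff₀ (hE u)).1 (by linarith), (div_le_iff₀ (hE u)).1 (by linarith)⟩
  set P : ℝ := Real.exp (-(c*δ)) with hP
  set GG : ℝ → ℝ := fun x => Real.exp (δ*x) * (1-P) / (Real.exp (δ*x) - 1) with hGG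
  set UB : ℝ → ℝ → ℝ := fun x ε =>
    Real.exp (|κ| * x) * (((1+ε) - (1-ε)*Real.exp (-(a*x)))/a) * GG x with hUB
  set LB : ℝ → ℝ → ℝ := fun x ε =>
    Real.exp (-(|κ| * x)) * (((1-ε) - (1+ε)*Real.exp (-(a*x)))/a) * GG x with hLB
  -- the main estimate
  have main : ∀ n : ℕ, ∀ ε : ℝ, 0 < ε → ∀ᶠ t : ℝ in atTop,
      LB (c/((n:ℝ)+1)) ε ≤ A (t-c) t / Real.exp (δ*t) ∧
      A (t-c) t / Real.exp (δ*t) ≤ UB (c/((n:ℝ)+1)) ε := by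
    intro n ε hε
    obtain ⟨T, hT⟩ := eventually_atTop.1 (hSbound ε hε)
    set hh : ℝ := c/((n:ℝ)+1) with hhh
    have hm0 : ((n:ℝ)+1) ≠ 0 := by positivity
    have hhpos : 0 < hh := div_pos hc (by positivity)
    set m : ℕ := n+1 with hm
    have hmc : ((m:ℕ):ℝ) * hh = c := by rw [hhh, hm]; push_cast; field_simp
    filter_upwards [eventually_ge_atTop (T + c)] with t ht
    set uu : ℕ → ℝ := fun j => t - c + (j:ℝ)*hh with huu
    have huumono : ∀ j : ℕ, uu j ≤ uu (j+1) := by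
      intro j; rw [huu]; simp only; push_cast; nlinarith [hhpos]
    have huu0 : ∀ j : ℕ, uu 0 ≤ uu j := by
      intro j; rw [huu]; simp only; push_cast
      nlinarith [mul_nonneg (Nat.cast_nonneg j : (0:ℝ) ≤ (j:ℝ)) hhpos.le]
    have huu0eq : uu 0 = t - c := by rw [huu]; simp
    have huuT : ∀ j : ℕ, T ≤ uu j := by
      intro j
      have h1 := huu0 j
      rw [huu0eq] at h1
      linarith
    have huulast : uu m = t := by
      rw [huu]; simp only; rw [hmc]; ring
    have hdiff : ∀ j : ℕ, uu (j+1) - uu j = hh := by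
      intro j; rw [huu]; simp only; push_cast; ring
    have htel : ∀ k : ℕ, A (uu 0) (uu k) = ∑ j ∈ Finset.range k, A (uu j) (uu (j+1)) := by
      intro k
      induction k with
      | zero => simpa using hAzero (uu 0)
      | succ k ih =>
          rw [Finset.sum_range_succ, ← ih, ← hAadd (uu 0) (uu k) (uu (k+1)) (huu0 k) (huumono k)]
    have hTj : ∀ j : ℕ, (1-ε) * (Real.exp (a*uu j)/a) ≤ S (uu j) ∧
        S (uu j) ≤ (1+ε) * (Real.exp (a*uu j)/a) := fun j => hT (uu j) (huuT j)
    have hWj : ∀ j : ℕ, W (uu j) (uu (j+1)) = S (uu (j+1)) - S (uu j) := by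
      intro j; rw [hsplit (uu j) (uu (j+1)) (huumono j)]; ring
    have e1 : ∀ j : ℕ, Real.exp (a*uu j) = Real.exp (a*uu (j+1)) * Real.exp (-(a*hh)) := by
      intro j
      rw [← Real.exp_add]
      congr 1
      linear_combination (-a) * hdiff j
    -- upper bound per term
    have hup : ∀ j : ℕ, A (uu j) (uu (j+1)) ≤
        Real.exp (|κ| * hh) * (((1+ε) - (1-ε)*Real.exp (-(a*hh)))/a) * Real.exp (δ * uu (j+1)) := by
      intro j
      have h2 := (hcomp (uu j) (uu (j+1)) (huumono j)).2
      rw [hdiff j, hWj j] at h2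
      have h3 : S (uu (j+1)) - S (uu j) ≤
          (1+ε) * (Real.exp (a*uu (j+1))/a) - (1-ε) * (Real.exp (a*uu j)/a) := by
        have g1 := (hTj j).1; have g2 := (hTj (j+1)).2; linarith
      have h4 := h2.trans (mul_le_mul_of_nonneg_left h3 (Real.exp_pos _).le)
      refine h4.trans_eq ?_
      have e2 : Real.exp (-(κ*uu (j+1)) + |κ| * hh) =
          Real.exp (|κ| * hh) * (Real.exp (a * uu (j+1)))⁻¹ * Real.exp (δ * uu (j+1)) := by
        rw [← Real.exp_neg, ← Real.exp_add, ← Real.exp_add]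
        congr 1
        rw [ha]; ring
      rw [e1 j, e2]
      have hexpne : Real.exp (a * uu (j+1)) ≠ 0 := (Real.exp_pos _).ne'
      field_simp
    -- lower bound per term
    have hlow : ∀ j : ℕ,
        Real.exp (-(|κ| * hh)) * (((1-ε) - (1+ε)*Real.exp (-(a*hh)))/a) * Real.exp (δ * uu (j+1))
          ≤ A (uu j) (uu (j+1)) := by
      intro j
      have h2 := (hcomp (uu j) (uu (j+1)) (huumono j)).1
      rw [hdiff j, hWj j] at h2
      have h3 : (1-ε) * (Real.exp (a*uu (j+1))/a) - (1+ε) * (Real.exp (a*uu j)/a) ≤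
          S (uu (j+1)) - S (uu j) := by
        have g1 := (hTj j).2; have g2 := (hTj (j+1)).1; linarith
      have h4 := le_trans (mul_le_mul_of_nonneg_left h3 (Real.exp_pos _).le) h2
      refine le_trans (le_of_eq ?_) h4
      have e2 : Real.exp (-(κ*uu (j+1)) - |κ| * hh) =
          Real.exp (-(|κ| * hh)) * (Real.exp (a * uu (j+1)))⁻¹ * Real.exp (δ * uu (j+1)) := by
        rw [← Real.exp_neg, ← Real.exp_add, ← Real.exp_add]
        congr 1
        rw [ha]; ring
      rw [e1 j, e2]
      have hexpne : Real.exp (a * uu (j+1)) ≠ 0 := (Real.exp_pos _).ne'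
      field_simp
    -- geometric sum
    have hx1 : Real.exp (δ*hh) ≠ 1 := by
      rw [Ne, Real.exp_eq_one_iff]
      exact mul_ne_zero hδ (ne_of_gt hhpos)
    have hgeom : ∑ j ∈ Finset.range m, Real.exp (δ * uu (j+1)) = Real.exp (δ*t) * GG hh := by
      have hterm : ∀ j ∈ Finset.range m, Real.exp (δ * uu (j+1)) =
          (Real.exp (δ*(t-c)) * Real.exp (δ*hh)) * (Real.exp (δ*hh))^j := by
        intro j _
        rw [← Real.exp_nat_mul, ← Real.exp_add, ← Real.exp_add]
        congr 1
        rw [huu]; push_cast; ring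
      rw [Finset.sum_congr rfl hterm, ← Finset.mul_sum, geom_sum_eq hx1]
      have hxm : (Real.exp (δ*hh))^m = Real.exp (δ*c) := by
        rw [← Real.exp_nat_mul]
        congr 1
        linear_combination δ * hmc
      rw [hxm, hGG]
      simp only
      have e3 : Real.exp (δ*(t-c)) = Real.exp (δ*t) * P := by
        rw [hP, ← Real.exp_add]; congr 1; ring
      have e4 : P * Real.exp (δ*c) = 1 := by
        rw [hP, ← Real.exp_add, show -(c*δ) + δ*c = 0 by ring, Real.exp_zero]
      rw [e3]
      have hD : Real.exp (δ*hh) - 1 ≠ 0 := sub_ne_zero.2 hx1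
      field_simp
      linear_combination e4
    -- put it together
    have hsum_up : A (t-c) t ≤
        Real.exp (|κ| * hh) * (((1+ε) - (1-ε)*Real.exp (-(a*hh)))/a) * (Real.exp (δ*t) * GG hh) := by
      have := htel m
      rw [huu0eq, huulast] at this
      rw [this, ← hgeom, Finset.mul_sum]
      exact Finset.sum_le_sum fun j _ => hup j
    have hsum_low :
        Real.exp (-(|κ| * hh)) * (((1-ε) - (1+ε)*Real.exp (-(a*hh)))/a) * (Real.exp (δ*t) * GG hh)
          ≤ A (t-c) t := by
      have := htel m
      rw [huu0eq, huulast] at this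
      rw [this, ← hgeom, Finset.mul_sum]
      exact Finset.sum_le_sum fun j _ => hlow j
    have hexpt : (0:ℝ) < Real.exp (δ*t) := Real.exp_pos _
    constructor
    · rw [hLB]
      simp only
      rw [le_div_iff₀ hexpt]
      calc Real.exp (-(|κ| * hh)) * (((1-ε) - (1+ε)*Real.exp (-(a*hh)))/a) * GG hh * Real.exp (δ*t)
          = Real.exp (-(|κ| * hh)) * (((1-ε) - (1+ε)*Real.exp (-(a*hh)))/a) * (Real.exp (δ*t) * GG hh) := by
            ring
        _ ≤ A (t-c) t := hsum_low
    · rw [hUB]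
      simp only
      rw [div_le_iff₀ hexpt]
      calc A (t-c) t ≤
          Real.exp (|κ| * hh) * (((1+ε) - (1-ε)*Real.exp (-(a*hh)))/a) * (Real.exp (δ*t) * GG hh) :=
            hsum_up
        _ = Real.exp (|κ| * hh) * (((1+ε) - (1-ε)*Real.exp (-(a*hh)))/a) * GG hh * Real.exp (δ*t) := by
            ring
  -- limits of the bounds
  have hL0 : (1:ℝ) - P ≠ 0 := by
    rw [hP]
    intro hPP
    have hPP1 : Real.exp (-(c*δ)) = 1 := by linarith
    rw [Real.exp_eq_one_iff] at hPP1
    exact (neg_ne_zero.2 (mul_ne_zero hc.ne' hδ)) hPP1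
  set L : ℝ := (1 - P)/δ with hLdef
  have hLne : L ≠ 0 := div_ne_zero hL0 hδ
  set εs : ℕ → ℝ := fun n => 1/(((n:ℝ)+1)^2) with hεs
  set hs : ℕ → ℝ := fun n => c/((n:ℝ)+1) with hhs
  have hεspos : ∀ n, 0 < εs n := fun n => by rw [hεs]; positivity
  -- decompositions of UB and LB
  have hUB_decomp : ∀ x ε : ℝ, UB x ε =
      (Real.exp (|κ| * x) * ((1 - Real.exp (-(a*x)))/a) * GG x) +
      ε * (Real.exp (|κ| * x) * ((1 + Real.exp (-(a*x)))/a) * GG x) := by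
    intro x ε; rw [hUB, hGG]; simp only; ring
  have hLB_decomp : ∀ x ε : ℝ, LB x ε =
      (Real.exp (-(|κ| * x)) * ((1 - Real.exp (-(a*x)))/a) * GG x) -
      ε * (Real.exp (-(|κ| * x)) * ((1 + Real.exp (-(a*x)))/a) * GG x) := by
    intro x ε; rw [hLB, hGG]; simp only; ring
  -- generic limits
  have limM : ∀ s : ℝ, Tendsto (fun x => Real.exp (s*x) * ((1 - Real.exp (-(a*x)))/a) * GG x)
      (nhdsWithin 0 {x | x ≠ 0}) (nhds L) := by
    intro s
    have t1 : Tendsto (fun x : ℝ => Real.exp (s*x) * Real.exp (δ*x) * ((1-P)/a))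
        (nhdsWithin 0 {x | x ≠ 0}) (nhds (1*1*((1-P)/a))) :=
      ((aux_exp_tendsto_one s).mul (aux_exp_tendsto_one δ)).mul_const _
    have t3 := t1.mul (aux_lim_ratio a δ hδ)
    have hval : (1*1*((1-P)/a)) * (a/δ) = L := by
      rw [hLdef]; field_simp
    rw [hval] at t3
    refine t3.congr fun x => ?_
    rw [hGG]; simp only; ring
  have limN : ∀ s : ℝ, Tendsto
      (fun x => x * (Real.exp (s*x) * ((1 + Real.exp (-(a*x)))/a) * GG x))
      (nhdsWithin 0 {x | x ≠ 0}) (nhds ((1 * ((1+1)/a) * (1*(1-P))) * (1/δ))) := by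
    intro s
    have c2 : Tendsto (fun x : ℝ => (1 + Real.exp (-(a*x)))/a)
        (nhdsWithin 0 {x | x ≠ 0}) (nhds ((1+1)/a)) := by
      have := (aux_exp_tendsto_one (-a)).congr fun x : ℝ => by rw [neg_mul]
      exact (tendsto_const_nhds.add this).div_const a
    have c3 : Tendsto (fun x : ℝ => Real.exp (δ*x)*(1-P))
        (nhdsWithin 0 {x | x ≠ 0}) (nhds (1*(1-P))) := (aux_exp_tendsto_one δ).mul_const _
    have t := (((aux_exp_tendsto_one s).mul c2).mul c3).mul (aux_lim_hratio δ hδ)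
    refine t.congr fun x => ?_
    rw [hGG]; simp only; ring
  have hseq := aux_hseq c hc
  -- sequence limits
  have limU1seq : Tendsto (fun n : ℕ => Real.exp (|κ| * hs n) * ((1 - Real.exp (-(a*hs n)))/a) * GG (hs n))
      atTop (nhds L) := (limM |κ|).comp hseq
  have limV1seq : Tendsto (fun n : ℕ => Real.exp (-(|κ| * hs n)) * ((1 - Real.exp (-(a*hs n)))/a) * GG (hs n))
      atTop (nhds L) := by
    have := ((limM (-|κ|)).congr fun x : ℝ => by rw [neg_mul]).comp hseq
    exact this
  have hsc : ∀ n : ℕ, 1/(((n:ℝ)+1)*c) * hs n = εs n := by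
    intro n
    have hn0 : ((n:ℝ)+1) ≠ 0 := by positivity
    rw [hεs, hhs]
    simp only
    field_simp
  have limεU2 : Tendsto (fun n : ℕ => εs n * (Real.exp (|κ| * hs n) * ((1 + Real.exp (-(a*hs n)))/a) * GG (hs n)))
      atTop (nhds 0) := by
    have t := (aux_inv_seq c hc).mul ((limN |κ|).comp hseq)
    rw [zero_mul] at t
    refine t.congr fun n => ?_
    simp only [Function.comp_apply]
    rw [← mul_assoc, hsc n]
  have limεV2 : Tendsto (fun n : ℕ => εs n * (Real.exp (-(|κ| * hs n)) * ((1 + Real.exp (-(a*hs n)))/a) * GG (hs n)))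
      atTop (nhds 0) := by
    have t := (aux_inv_seq c hc).mul
      (((limN (-|κ|)).congr fun x : ℝ => by rw [neg_mul]).comp hseq)
    rw [zero_mul] at t
    refine t.congr fun n => ?_
    simp only [Function.comp_apply]
    rw [← mul_assoc, hsc n]
  have limUBseq : Tendsto (fun n : ℕ => UB (hs n) (εs n)) atTop (nhds L) := by
    have t := limU1seq.add limεU2
    rw [add_zero] at t
    exact t.congr fun n => (hUB_decomp (hs n) (εs n)).symm
  have limLBseq : Tendsto (fun n : ℕ => LB (hs n) (εs n)) atTop (nhds L) := by
    have t := limV1seq.sub limεV2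
    rw [sub_zero] at t
    exact t.congr fun n => (hLB_decomp (hs n) (εs n)).symm
  -- squeeze
  have hFlim : Tendsto (fun t : ℝ => A (t-c) t / Real.exp (δ*t)) atTop (nhds L) := by
    refine aux_squeeze _ (fun n => UB (hs n) (εs n)) (fun n => LB (hs n) (εs n)) L
      limUBseq limLBseq fun n => ?_
    exact main n (εs n) (hεspos n)
  -- conclusion
  have hgoal : ∀ t : ℝ,
      (∑' i : I, Set.indicator {i : I | t - c < f i ∧ f i ≤ t} g i) / (L * Real.exp (δ*t))
        = (A (t-c) t / Real.exp (δ*t)) / L := by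
    intro t
    rw [hts2, mul_comm, ← div_div]
  have final := hFlim.div_const L
  rw [div_self hLne] at final
  exact final.congr fun t => (hgoal t).symm
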